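/- For a Kohnert diagram K, the shape of ψ(K) equals the nearest skyline diagram K↑; here ψ(K) is the skyline filling whose k-th row consists of the row indices of the boxes in the k-th thread of K, written in weakly decreasing order. -/

import Mathlib

def skyline (a : List ℕ) : Finset (ℕ × ℕ) :=
  (Finset.range a.length).biUnion fun i =>
    (Finset.range (a.getD i 0)).image fun j => (i + 1, j + 1)
def KMove (K K' : Finset (ℕ × ℕ)) : Prop :=
  ∃ r c r', (r, c) ∈ K ∧ (∀ c', (r, c') ∈ K → c' ≤ c) ∧
    1 ≤ r' ∧ r' < r ∧ (r', c) ∉ K ∧ (∀ s, r' < s → s < r → (s, c) ∈ K) ∧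
    K' = insert (r', c) (K.erase (r, c))
def NStep (K K' : Finset (ℕ × ℕ)) : Prop :=
  ∃ r c, (r, c) ∈ K ∧ 2 ≤ c ∧ (r, c - 1) ∉ K ∧
    (∀ r₂ c₂, (r₂, c₂) ∈ K → 2 ≤ c₂ → (r₂, c₂ - 1) ∉ K → r₂ < r ∨ (r₂ = r ∧ c ≤ c₂)) ∧
    ∃ r'', r < r'' ∧ (r'', c) ∉ K ∧ (∀ s, r < s → s < r'' → (s, c) ∈ K) ∧
      K' = insert (r'', c) (K.erase (r, c))

def IsSkyline (K : Finset (ℕ × ℕ)) : Prop :=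
  ∀ p ∈ K, 2 ≤ p.2 → (p.1, p.2 - 1) ∈ K
def IsStart (K : Set (ℕ × ℕ)) (p : ℕ × ℕ) : Prop :=
  p ∈ K ∧ p.2 = 1 ∧ ∀ r, (r, 1) ∈ K → p.1 ≤ r

def ThreadNext (K : Set (ℕ × ℕ)) (p q : ℕ × ℕ) : Prop :=
  q ∈ K ∧ q.2 = p.2 + 1 ∧ q.1 ≤ p.1 ∧ ∀ r, (r, p.2 + 1) ∈ K → r ≤ p.1 → r ≤ q.1

def firstThread (K : Set (ℕ × ℕ)) : Set (ℕ × ℕ) :=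
  {x | ∃ p, IsStart K p ∧ Relation.ReflTransGen (ThreadNext K) p x}

def peel (K : Set (ℕ × ℕ)) : ℕ → Set (ℕ × ℕ)
  | 0 => K
  | i + 1 => peel K i \ firstThread (peel K i)

def threadAt (K : Set (ℕ × ℕ)) (i : ℕ) : Set (ℕ × ℕ) := firstThread (peel K i)

/-! ### Basic lemmas about threads -/

lemma threadNext_unique {A : Set (ℕ × ℕ)} {p q q' : ℕ × ℕ}
    (h : ThreadNext A p q) (h' : ThreadNext A p q') : q = q' := by
  obtain ⟨hq, hc, hr, hm⟩ := h
  obtain ⟨hq', hc', hr', hm'⟩ := h'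
  have h1 : q.1 ≤ q'.1 := hm' q.1 (by rw [← hc]; exact hq) hr
  have h2 : q'.1 ≤ q.1 := hm q'.1 (by rw [← hc']; exact hq') hr'
  have : q.1 = q'.1 := le_antisymm h1 h2
  exact Prod.ext this (hc.trans hc'.symm)

lemma isStart_unique {A : Set (ℕ × ℕ)} {p p' : ℕ × ℕ}
    (h : IsStart A p) (h' : IsStart A p') : p = p' := by
  obtain ⟨hp, hc, hm⟩ := h
  obtain ⟨hp', hc', hm'⟩ := h'
  have h1 : p.1 ≤ p'.1 := hm p'.1 (by rw [← hc']; exact hp')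
  have h2 : p'.1 ≤ p.1 := hm' p.1 (by rw [← hc]; exact hp)
  exact Prod.ext (le_antisymm h1 h2) (hc.trans hc'.symm)

lemma chain_mem {A : Set (ℕ × ℕ)} {p x : ℕ × ℕ} (hp : p ∈ A)
    (h : Relation.ReflTransGen (ThreadNext A) p x) : x ∈ A := by
  induction h with
  | refl => exact hp
  | tail _ hstep ih => exact hstep.1

lemma chain_row_le {A : Set (ℕ × ℕ)} {p x : ℕ × ℕ}
    (h : Relation.ReflTransGen (ThreadNext A) p x) : x.1 ≤ p.1 := by
  induction h with
  | refl => exact le_refl _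
  | tail _ hstep ih => exact le_trans hstep.2.2.1 ih

lemma firstThread_subset {A : Set (ℕ × ℕ)} : firstThread A ⊆ A := by
  rintro x ⟨p, hp, hchain⟩
  exact chain_mem hp.1 hchain

lemma firstThread_tail {A : Set (ℕ × ℕ)} {x q : ℕ × ℕ}
    (hx : x ∈ firstThread A) (h : ThreadNext A x q) : q ∈ firstThread A := by
  obtain ⟨p, hp, hchain⟩ := hx
  exact ⟨p, hp, hchain.tail h⟩

lemma threadNext_exists {A : Set (ℕ × ℕ)} (hfin : A.Finite) {p : ℕ × ℕ} {γ : ℕ}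
    (hγ : (γ, p.2 + 1) ∈ A) (hle : γ ≤ p.1) : ∃ q, ThreadNext A p q := by
  set T : Set ℕ := {g | (g, p.2 + 1) ∈ A ∧ g ≤ p.1} with hT
  have hTfin : T.Finite := by
    have : T ⊆ (fun q : ℕ × ℕ => q.1) '' A := fun g hg => ⟨(g, p.2 + 1), hg.1, rfl⟩
    exact (hfin.image _).subset this
  obtain ⟨m, hm, hmax⟩ := Set.exists_max_image T id hTfin ⟨γ, hγ, hle⟩
  exact ⟨(m, p.2 + 1), hm.1, rfl, hm.2, fun g hg hg' => hmax g ⟨hg, hg'⟩⟩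

lemma firstThread_row_le {A : Set (ℕ × ℕ)} {x p₀ : ℕ × ℕ} (hst : IsStart A p₀)
    (hx : x ∈ firstThread A) : x.1 ≤ p₀.1 := by
  obtain ⟨p, hp, hchain⟩ := hx
  rw [isStart_unique hp hst] at hchain
  exact chain_row_le hchain

lemma firstThread_pred {A : Set (ℕ × ℕ)} {x : ℕ × ℕ}
    (hx : x ∈ firstThread A) (hcol : x.2 ≠ 1) :
    ∃ p ∈ firstThread A, ThreadNext A p x := by
  obtain ⟨p₀, hp₀, hchain⟩ := hx
  rcases hchain.cases_tail with h | ⟨y, hy, hstep⟩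
  · exact absurd (h ▸ hp₀.2.1) hcol
  · exact ⟨y, ⟨p₀, hp₀, hy⟩, hstep⟩

lemma firstThread_empty {A : Set (ℕ × ℕ)} (h : ∀ q, (q, 1) ∉ A) :
    firstThread A = ∅ := by
  ext x
  simp only [firstThread, Set.mem_setOf_eq, Set.mem_empty_iff_false, iff_false]
  rintro ⟨p, hp, -⟩
  exact h p.1 (by rw [← hp.2.1]; exact hp.1)

/-! ### The swap map and the invariant -/

def swapB (r c r'' : ℕ) (p : ℕ × ℕ) : ℕ × ℕ := if p = (r, c) then (r'', c) else p

lemma swapB_apply_ne {r c r'' : ℕ} {p : ℕ × ℕ} (h : p ≠ (r, c)) :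
    swapB r c r'' p = p := if_neg h

lemma swapB_apply_eq {r c r'' : ℕ} : swapB r c r'' (r, c) = (r'', c) := if_pos rfl

structure BoxInv (A : Set (ℕ × ℕ)) (r c r'' : ℕ) : Prop where
  fin : A.Finite
  hc : 2 ≤ c
  hrr : r < r''
  mem : (r, c) ∈ A
  nmem : (r'', c) ∉ A
  gap : (r, c - 1) ∉ A
  midr : ∀ γ, r < γ → γ < r'' → (γ, c - 1) ∈ A → (γ, c) ∈ A
  midfull : ∀ γ, r < γ → γ < r'' → (γ, c) ∈ A → ∀ j, 1 ≤ j → j ≤ c → (γ, j) ∈ A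
  q : ∀ γ, r < γ → ∀ j, c ≤ j → (γ, j + 1) ∈ A → (γ, j) ∈ A

namespace BoxInv

variable {A : Set (ℕ × ℕ)} {r c r'' : ℕ}

lemma swap_image_eq (hI : BoxInv A r c r'') :
    swapB r c r'' '' A = insert (r'', c) (A \ {(r, c)}) := by
  ext x
  simp only [Set.mem_image, Set.mem_insert_iff, Set.mem_diff, Set.mem_singleton_iff]
  constructor
  · rintro ⟨y, hy, rfl⟩
    by_cases h : y = (r, c)
    · subst h; rw [swapB_apply_eq]; exact Or.inl rfl
    · rw [swapB_apply_ne h]; exact Or.inr ⟨hy, h⟩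
  · rintro (rfl | ⟨h1, h2⟩)
    · exact ⟨(r, c), hI.mem, swapB_apply_eq⟩
    · exact ⟨x, h1, swapB_apply_ne h2⟩

lemma mem_swap_of_col (hI : BoxInv A r c r'') {x : ℕ × ℕ} (hx : x.2 ≠ c) :
    x ∈ swapB r c r'' '' A ↔ x ∈ A := by
  rw [hI.swap_image_eq]
  simp only [Set.mem_insert_iff, Set.mem_diff, Set.mem_singleton_iff]
  constructor
  · rintro (rfl | ⟨h1, -⟩)
    · exact absurd rfl hx
    · exact h1
  · intro h
    refine Or.inr ⟨h, ?_⟩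
    rintro rfl
    exact hx rfl

lemma mem_swap_col_c (hI : BoxInv A r c r'') {γ : ℕ} :
    (γ, c) ∈ swapB r c r'' '' A ↔ γ = r'' ∨ ((γ, c) ∈ A ∧ γ ≠ r) := by
  rw [hI.swap_image_eq]
  simp only [Set.mem_insert_iff, Prod.mk.injEq, Set.mem_diff, Set.mem_singleton_iff]
  constructor
  · rintro (⟨rfl, -⟩ | ⟨h1, h2⟩)
    · exact Or.inl rfl
    · exact Or.inr ⟨h1, fun h => h2 ⟨h, trivial⟩⟩
  · rintro (rfl | ⟨h1, h2⟩)
    · exact Or.inl ⟨rfl, trivial⟩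
    · exact Or.inr ⟨h1, fun h => h2 h.1⟩

lemma injOn_swap (hI : BoxInv A r c r'') : Set.InjOn (swapB r c r'') A := by
  intro x hx y hy hxy
  by_cases h1 : x = (r, c) <;> by_cases h2 : y = (r, c)
  · rw [h1, h2]
  · rw [h1, swapB_apply_eq, swapB_apply_ne h2] at hxy
    exact absurd (hxy ▸ hy) hI.nmem
  · rw [h2, swapB_apply_eq, swapB_apply_ne h1] at hxy
    exact absurd (hxy ▸ hx) hI.nmem
  · rwa [swapB_apply_ne h1, swapB_apply_ne h2] at hxy

end BoxInv

lemma swap_image_of_not_mem {r c r'' : ℕ} {X : Set (ℕ × ℕ)} (h : (r, c) ∉ X) :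
    swapB r c r'' '' X = X := by
  ext x
  constructor
  · rintro ⟨y, hy, rfl⟩
    rw [swapB_apply_ne (fun hyx => h (hyx ▸ hy))]
    exact hy
  · intro hx
    exact ⟨x, hx, swapB_apply_ne (fun hyx => h (hyx ▸ hx))⟩

namespace BoxInv

variable {A : Set (ℕ × ℕ)} {r c r'' : ℕ}

lemma step_fwd (hI : BoxInv A r c r'') {p q : ℕ × ℕ}
    (hpA : p ∈ A)
    (hbnd : ∀ m, r < m → m < r'' → (m, c) ∈ A → p.1 ≤ m)
    (hflag : p = (r, c) → ∀ m, r < m → m < r'' → (m, c) ∉ A)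
    (h : ThreadNext A p q) :
    ThreadNext (swapB r c r'' '' A) (swapB r c r'' p) (swapB r c r'' q) ∧
      (q = (r, c) → ∀ m, r < m → m < r'' → (m, c) ∉ A) := by
  have hc2 : 2 ≤ c := hI.hc
  have hrr' : r < r'' := hI.hrr
  obtain ⟨hqA, hqc, hqr, hqmax⟩ := h
  by_cases hq : q = (r, c)
  · -- the thread picks the moved box; the swapped thread picks (r'', c)
    subst hq
    have hpc : p.2 + 1 = c := hqc.symm
    have hpne : p ≠ (r, c) := by
      intro hp; rw [hp] at hpc; simp at hpc
    have hp2 : p.2 = c - 1 := by omega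
    have hrp : r ≤ p.1 := hqr
    have hpgt : r < p.1 := by
      rcases lt_or_eq_of_le hrp with h | h
      · exact h
      · exact absurd ((Prod.ext h.symm hp2 : p = (r, c - 1)) ▸ hpA) hI.gap
    have hr''p : r'' ≤ p.1 := by
      by_contra hlt
      push_neg at hlt
      have hmem : (p.1, c - 1) ∈ A := (Prod.ext rfl hp2 : p = (p.1, c - 1)) ▸ hpA
      have hcmem : (p.1, c) ∈ A := hI.midr p.1 hpgt hlt hmem
      have h5 : p.1 ≤ r := hqmax p.1 (by rw [hpc]; exact hcmem) le_rfl
      omega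
    have hme : ∀ m, r < m → m < r'' → (m, c) ∉ A := by
      intro m h1 h2 hm
      have h5 : m ≤ r := hqmax m (by rw [hpc]; exact hm) (le_trans h2.le hr''p)
      omega
    refine ⟨?_, fun _ => hme⟩
    rw [swapB_apply_ne hpne, swapB_apply_eq]
    refine ⟨hI.mem_swap_col_c.mpr (Or.inl rfl), hqc, hr''p, ?_⟩
    intro γ hγ hγle
    rw [hpc] at hγ
    rcases hI.mem_swap_col_c.mp hγ with rfl | ⟨hγA, -⟩
    · exact le_rfl
    · have h5 : γ ≤ r := hqmax γ (by rw [hpc]; exact hγA) hγle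
      omega
  · by_cases hp : p = (r, c)
    · -- continuing from the moved box
      subst hp
      have hme := hflag rfl
      have hqcol : q.2 = c + 1 := hqc
      have hqr' : q.1 ≤ r := hqr
      refine ⟨?_, fun h => absurd h hq⟩
      rw [swapB_apply_eq, swapB_apply_ne hq]
      refine ⟨(hI.mem_swap_of_col (by omega : q.2 ≠ c)).mpr hqA, hqcol, ?_, ?_⟩
      · exact le_trans hqr' hI.hrr.le
      · intro γ hγ hγle
        have hγle' : γ ≤ r'' := hγle
        have hγA : (γ, c + 1) ∈ A := (hI.mem_swap_of_col (by omega)).mp hγ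
        rcases le_or_gt γ r with h | h
        · exact hqmax γ hγA h
        · exfalso
          have hγc : (γ, c) ∈ A := hI.q γ h c le_rfl hγA
          rcases lt_or_eq_of_le hγle' with h2 | h2
          · exact hme γ h h2 hγc
          · rw [h2] at hγc; exact hI.nmem hγc
    · -- generic case: both points fixed by the swap
      refine ⟨?_, fun h => absurd h hq⟩
      rw [swapB_apply_ne hp, swapB_apply_ne hq]
      refine ⟨?_, hqc, hqr, ?_⟩
      · rw [hI.swap_image_eq]
        exact Set.mem_insert_of_mem _ ⟨hqA, hq⟩
      · intro γ hγ hγle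
        rw [hI.swap_image_eq] at hγ
        rcases Set.mem_insert_iff.mp hγ with hγ' | ⟨hγA, -⟩
        · -- the new box (r'', c) is a candidate
          rw [Prod.ext_iff] at hγ'
          obtain ⟨h2, h1⟩ := hγ'
          simp only at h1 h2
          subst h2
          by_contra hlt
          push_neg at hlt
          have hrq : r ≤ q.1 := hqmax r (by rw [h1]; exact hI.mem) (le_trans hI.hrr.le hγle)
          have hqgt : r < q.1 := by
            rcases lt_or_eq_of_le hrq with h | h
            · exact h
            · exfalso
              apply hq
              have : q = (q.1, q.2) := rfl
              rw [this, ← h, hqc, h1]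
          have hqmid : (q.1, c) ∈ A := by
            rw [← h1]
            exact (Prod.ext rfl hqc : q = (q.1, p.2 + 1)) ▸ hqA
          have h6 := hbnd q.1 hqgt (by omega) hqmid
          omega
        · exact hqmax γ hγA hγle

lemma step_none (hI : BoxInv A r c r'') {p : ℕ × ℕ} (hpA : p ∈ A)
    (hflag : p = (r, c) → ∀ m, r < m → m < r'' → (m, c) ∉ A)
    (h : ∀ q, ¬ ThreadNext A p q) :
    ∀ q, ¬ ThreadNext (swapB r c r'' '' A) (swapB r c r'' p) q := by
  have hc2 : 2 ≤ c := hI.hc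
  have hcand : ∀ γ, γ ≤ p.1 → (γ, p.2 + 1) ∉ A := by
    intro γ hγ hmem
    obtain ⟨q, hq⟩ := threadNext_exists hI.fin hmem hγ
    exact h q hq
  intro q hq
  by_cases hp : p = (r, c)
  · subst hp
    rw [swapB_apply_eq] at hq
    obtain ⟨hqA, hqc, hqr, -⟩ := hq
    have hqcol : q.2 = c + 1 := hqc
    have hqr' : q.1 ≤ r'' := hqr
    have hqA' : (q.1, c + 1) ∈ A := by
      have h1 := (hI.mem_swap_of_col (by omega : q.2 ≠ c)).mp hqA
      exact (Prod.ext rfl hqcol : q = (q.1, c + 1)) ▸ h1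
    rcases le_or_gt q.1 r with hle | hlt
    · exact hcand q.1 hle (by simpa using hqA')
    · have hγc : (q.1, c) ∈ A := hI.q q.1 hlt c le_rfl hqA'
      rcases lt_or_eq_of_le hqr' with h2 | h2
      · exact hflag rfl q.1 hlt h2 hγc
      · rw [h2] at hγc; exact hI.nmem hγc
  · rw [swapB_apply_ne hp] at hq
    obtain ⟨hqA, hqc, hqr, -⟩ := hq
    rw [hI.swap_image_eq] at hqA
    rcases Set.mem_insert_iff.mp hqA with hq' | ⟨hqA', -⟩
    · rw [Prod.ext_iff] at hq'
      obtain ⟨h2, h1⟩ := hq'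
      simp only at h1 h2
      have h3 : r'' ≤ p.1 := h2 ▸ hqr
      have := hI.hrr
      exact hcand r (by omega) (by rw [← hqc, h1]; exact hI.mem)
    · apply hcand q.1 hqr
      exact (Prod.ext rfl hqc : q = (q.1, p.2 + 1)) ▸ hqA'

lemma isStart_swap (hI : BoxInv A r c r'') {p : ℕ × ℕ} :
    IsStart (swapB r c r'' '' A) p ↔ IsStart A p := by
  have hc2 : 2 ≤ c := hI.hc
  have hcol : ∀ x : ℕ × ℕ, x.2 = 1 → (x ∈ swapB r c r'' '' A ↔ x ∈ A) := by
    intro x hx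
    exact hI.mem_swap_of_col (by omega)
  constructor
  · rintro ⟨h1, h2, h3⟩
    exact ⟨(hcol p h2).mp h1, h2, fun ρ hρ => h3 ρ ((hcol (ρ, 1) rfl).mpr hρ)⟩
  · rintro ⟨h1, h2, h3⟩
    exact ⟨(hcol p h2).mpr h1, h2, fun ρ hρ => h3 ρ ((hcol (ρ, 1) rfl).mp hρ)⟩

lemma chain_fwd (hI : BoxInv A r c r'') {p₀ x : ℕ × ℕ} (hst : IsStart A p₀)
    (h : Relation.ReflTransGen (ThreadNext A) p₀ x) :
    Relation.ReflTransGen (ThreadNext (swapB r c r'' '' A)) p₀ (swapB r c r'' x) ∧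
      (x = (r, c) → ∀ m, r < m → m < r'' → (m, c) ∉ A) := by
  have hp₀ne : p₀ ≠ (r, c) := by
    intro hp
    have h1 : c = 1 := by rw [hp] at hst; exact hst.2.1
    have := hI.hc
    omega
  induction h with
  | refl =>
    rw [swapB_apply_ne hp₀ne]
    exact ⟨Relation.ReflTransGen.refl, fun h => absurd h hp₀ne⟩
  | @tail x y hxy hstep ih =>
    have hxA : x ∈ A := chain_mem hst.1 hxy
    have hbnd : ∀ m, r < m → m < r'' → (m, c) ∈ A → x.1 ≤ m := by
      intro m h1 h2 hm
      have hm1 : (m, 1) ∈ A := hI.midfull m h1 h2 hm 1 le_rfl (le_trans one_le_two hI.hc)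
      exact (chain_row_le hxy).trans (hst.2.2 m hm1)
    obtain ⟨hTN, hflagy⟩ := hI.step_fwd hxA hbnd ih.2 hstep
    exact ⟨ih.1.tail hTN, hflagy⟩

lemma fT_equiv (hI : BoxInv A r c r'') :
    firstThread (swapB r c r'' '' A) = swapB r c r'' '' firstThread A := by
  apply Set.Subset.antisymm
  · rintro y ⟨p₀, hst', hchain'⟩
    have hst : IsStart A p₀ := hI.isStart_swap.mp hst'
    have hp₀ne : p₀ ≠ (r, c) := by
      intro hp
      have h1 : c = 1 := by rw [hp] at hst; exact hst.2.1
      have := hI.hc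
      omega
    have key : ∀ z, Relation.ReflTransGen (ThreadNext (swapB r c r'' '' A)) p₀ z →
        ∃ x, Relation.ReflTransGen (ThreadNext A) p₀ x ∧ z = swapB r c r'' x := by
      intro z hz
      induction hz with
      | refl => exact ⟨p₀, Relation.ReflTransGen.refl, (swapB_apply_ne hp₀ne).symm⟩
      | @tail y z hy hstep ih =>
        obtain ⟨x, hx, rfl⟩ := ih
        have hxA : x ∈ A := chain_mem hst.1 hx
        have hflag := (hI.chain_fwd hst hx).2
        by_cases hex : ∃ w, ThreadNext A x w
        · obtain ⟨w, hw⟩ := hex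
          have hbnd : ∀ m, r < m → m < r'' → (m, c) ∈ A → x.1 ≤ m := by
            intro m h1 h2 hm
            have hm1 : (m, 1) ∈ A :=
              hI.midfull m h1 h2 hm 1 le_rfl (le_trans one_le_two hI.hc)
            exact (chain_row_le hx).trans (hst.2.2 m hm1)
          have hTN := (hI.step_fwd hxA hbnd hflag hw).1
          exact ⟨w, hx.tail hw, threadNext_unique hstep hTN⟩
        · push_neg at hex
          exact absurd hstep (hI.step_none hxA hflag hex z)
    obtain ⟨x, hx, rfl⟩ := key y hchain'
    exact ⟨x, ⟨p₀, hst, hx⟩, rfl⟩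
  · rintro _ ⟨x, ⟨p₀, hst, hchain⟩, rfl⟩
    exact ⟨p₀, hI.isStart_swap.mpr hst, (hI.chain_fwd hst hchain).1⟩

end BoxInv

/-! ### Peeling -/

lemma peel_zero (X : Set (ℕ × ℕ)) : peel X 0 = X := rfl

lemma peel_succ (X : Set (ℕ × ℕ)) (i : ℕ) :
    peel X (i + 1) = peel X i \ firstThread (peel X i) := rfl

lemma peel_shift (X : Set (ℕ × ℕ)) : ∀ i,
    peel X (i + 1) = peel (X \ firstThread X) i := by
  intro i
  induction i with
  | zero => rfl
  | succ i ih => rw [peel_succ, ih, peel_succ]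

lemma peel_subset (X : Set (ℕ × ℕ)) : ∀ i, peel X i ⊆ X := by
  intro i
  induction i with
  | zero => exact fun _ h => h
  | succ i ih => exact fun x hx => ih (hx.1)

lemma threadAt_subset (X : Set (ℕ × ℕ)) (i : ℕ) : threadAt X i ⊆ X :=
  fun x hx => peel_subset X i (firstThread_subset hx)

lemma threadAt_shift (X : Set (ℕ × ℕ)) (i : ℕ) :
    threadAt X (i + 1) = threadAt (X \ firstThread X) i := by
  unfold threadAt
  rw [peel_shift]

/-- Climbing along a fully-present row prefix inside the first thread. -/
lemma chain_climb {A : Set (ℕ × ℕ)} (hfin : A.Finite) {γ c : ℕ} :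
    ∀ d j, j + d = c → (∀ j', j ≤ j' → j' ≤ c → (γ, j') ∈ A) →
      (γ, j) ∈ firstThread A → (γ, c) ∈ firstThread A := by
  intro d
  induction d with
  | zero =>
    intro j hj hfull hT
    have : j = c := by omega
    exact this ▸ hT
  | succ d ih =>
    intro j hj hfull hT
    have hnext : (γ, j + 1) ∈ A := hfull (j + 1) (by omega) (by omega)
    obtain ⟨w, hw⟩ := threadNext_exists hfin (p := (γ, j)) hnext le_rfl
    have hw1 : w.1 = γ := le_antisymm hw.2.2.1 (hw.2.2.2 γ hnext le_rfl)
    have hweq : w = (γ, j + 1) := Prod.ext hw1 hw.2.1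
    exact ih (j + 1) (by omega) (fun j' h1 h2 => hfull j' (by omega) h2)
      (hweq ▸ firstThread_tail hT hw)

namespace BoxInv

variable {A : Set (ℕ × ℕ)} {r c r'' : ℕ}

lemma closure (hI : BoxInv A r c r'') (hrc : (r, c) ∉ firstThread A) :
    BoxInv (A \ firstThread A) r c r'' := by
  have hc2 : 2 ≤ c := hI.hc
  refine ⟨hI.fin.subset Set.diff_subset, hI.hc, hI.hrr, ⟨hI.mem, hrc⟩,
    fun h => hI.nmem h.1, fun h => hI.gap h.1, ?_, ?_, ?_⟩
  · -- midr
    rintro γ h1 h2 ⟨hg1, hg2⟩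
    refine ⟨hI.midr γ h1 h2 hg1, ?_⟩
    intro hgT
    obtain ⟨p, hpT, hTN⟩ := firstThread_pred hgT (by simp; omega)
    obtain ⟨hpA, hpc, hpr, -⟩ := hTN
    have hpc' : p.2 = c - 1 := by
      have : c = p.2 + 1 := hpc
      omega
    have hpr' : γ ≤ p.1 := hpr
    rcases lt_or_eq_of_le hpr' with hlt | heq
    · obtain ⟨p₀, hst, hch⟩ := hpT
      have hb1 : p.1 ≤ p₀.1 := chain_row_le hch
      have hg1' : (γ, 1) ∈ A :=
        hI.midfull γ h1 h2 (hI.midr γ h1 h2 hg1) 1 le_rfl (by omega)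
      have hb2 : p₀.1 ≤ γ := hst.2.2 γ hg1'
      omega
    · apply hg2
      have : p = (γ, c - 1) := Prod.ext heq.symm hpc'
      exact this ▸ hpT
  · -- midfull
    rintro γ h1 h2 ⟨hgA, hgT⟩ j hj1 hjc
    refine ⟨hI.midfull γ h1 h2 hgA j hj1 hjc, ?_⟩
    intro hjT
    obtain ⟨p₀, hst, hch⟩ := hjT
    have hb1 : γ ≤ p₀.1 := chain_row_le hch
    have hg1' : (γ, 1) ∈ A := hI.midfull γ h1 h2 hgA 1 le_rfl (by omega)
    have hb2 : p₀.1 ≤ γ := hst.2.2 γ hg1'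
    apply hgT
    exact chain_climb hI.fin (c - j) j (by omega)
      (fun j' hj' hj'c => hI.midfull γ h1 h2 hgA j' (by omega) hj'c)
      ⟨p₀, hst, hch⟩
  · -- q
    rintro γ h1 j hj ⟨hA1, hT1⟩
    refine ⟨hI.q γ h1 j hj hA1, ?_⟩
    intro hT
    obtain ⟨w, hw⟩ := threadNext_exists hI.fin (p := (γ, j)) hA1 le_rfl
    have hw1 : w.1 = γ := le_antisymm hw.2.2.1 (hw.2.2.2 γ hA1 le_rfl)
    have hweq : w = (γ, j + 1) := Prod.ext hw1 hw.2.1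
    exact hT1 (hweq ▸ firstThread_tail hT hw)

lemma image_diff_fT (hI : BoxInv A r c r'') :
    (swapB r c r'' '' A) \ firstThread (swapB r c r'' '' A) =
      swapB r c r'' '' (A \ firstThread A) := by
  rw [hI.fT_equiv]
  apply Set.Subset.antisymm
  · rintro x ⟨⟨a, ha, rfl⟩, hnT⟩
    exact ⟨a, ⟨ha, fun haT => hnT ⟨a, haT, rfl⟩⟩, rfl⟩
  · rintro _ ⟨a, ⟨ha, haT⟩, rfl⟩
    refine ⟨⟨a, ha, rfl⟩, ?_⟩
    rintro ⟨b, hbT, hba⟩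
    exact haT (hI.injOn_swap (firstThread_subset hbT) ha hba ▸ hbT)

end BoxInv

lemma master {r c r'' : ℕ} : ∀ i (A : Set (ℕ × ℕ)), BoxInv A r c r'' →
    threadAt (swapB r c r'' '' A) i = swapB r c r'' '' threadAt A i := by
  intro i
  induction i with
  | zero => intro A hI; exact hI.fT_equiv
  | succ i ih =>
    intro A hI
    rw [threadAt_shift, threadAt_shift, hI.image_diff_fT]
    by_cases hmem : (r, c) ∈ firstThread A
    · have h1 : (r, c) ∉ A \ firstThread A := fun h => h.2 hmem
      rw [swap_image_of_not_mem h1, swap_image_of_not_mem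
        (fun h => h1 (threadAt_subset _ i h))]
    · exact ih _ (hI.closure hmem)

lemma master_ncard {A : Set (ℕ × ℕ)} {r c r'' : ℕ} (hI : BoxInv A r c r'') (i : ℕ) :
    (threadAt (swapB r c r'' '' A) i).ncard = (threadAt A i).ncard := by
  rw [master i A hI]
  exact Set.ncard_image_of_injOn (hI.injOn_swap.mono (threadAt_subset A i))

/-! ### From NStep to the invariant -/

def PosDiag (K : Finset (ℕ × ℕ)) : Prop := ∀ p ∈ K, 1 ≤ p.1 ∧ 1 ≤ p.2

lemma nstep_data {K K' : Finset (ℕ × ℕ)} (h : NStep K K') :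
    ∃ r c r'', BoxInv (↑K) r c r'' ∧
      (↑K' : Set (ℕ × ℕ)) = swapB r c r'' '' ↑K ∧ 2 ≤ c ∧ (r, c) ∈ K ∧ r < r'' := by
  obtain ⟨r, c, hrc, hc2, hgap, hmax, r'', hlt, hnm, hbetw, hK'⟩ := h
  -- rows strictly above r are gap-free
  have hrowfree : ∀ γ, r < γ → ∀ j, 1 ≤ j → (γ, j + 1) ∈ K → (γ, j) ∈ K := by
    intro γ hγ j hj hmem
    by_contra hne
    have hj' : (γ, (j + 1) - 1) ∉ K := by simpa using hne
    rcases hmax γ (j + 1) hmem (by omega) hj' with h | ⟨h, -⟩ <;> omega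
  have hfull : ∀ γ, r < γ → (γ, c) ∈ K → ∀ j, 1 ≤ j → j ≤ c → (γ, j) ∈ K := by
    intro γ hγ hmem j hj1 hjc
    have key : ∀ d, d ≤ c - j → (γ, c - d) ∈ K := by
      intro d
      induction d with
      | zero => intro _; simpa using hmem
      | succ d ih =>
        intro hd
        have h1 : (γ, c - d) ∈ K := ih (by omega)
        have h2 : c - (d + 1) + 1 = c - d := by omega
        exact hrowfree γ hγ (c - (d + 1)) (by omega) (by rw [h2]; exact h1)
    have := key (c - j) le_rfl
    have h3 : c - (c - j) = j := by omega
    rwa [h3] at this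
  have hI : BoxInv (↑K) r c r'' := by
    refine ⟨K.finite_toSet, hc2, hlt, hrc, hnm, hgap, ?_, ?_, ?_⟩
    · exact fun γ h1 h2 _ => hbetw γ h1 h2
    · exact fun γ h1 h2 hm j hj1 hjc => hfull γ h1 hm j hj1 hjc
    · exact fun γ h1 j hj hmem => hrowfree γ h1 j (by omega) hmem
  refine ⟨r, c, r'', hI, ?_, hc2, hrc, hlt⟩
  rw [hK', hI.swap_image_eq]
  push_cast
  rfl

lemma nstep_ncard {K K' : Finset (ℕ × ℕ)} (h : NStep K K') (i : ℕ) :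
    (threadAt (↑K') i).ncard = (threadAt (↑K) i).ncard := by
  obtain ⟨r, c, r'', hI, hEq, -, -, -⟩ := nstep_data h
  rw [hEq]
  exact master_ncard hI i

lemma nstep_col1 {K K' : Finset (ℕ × ℕ)} (h : NStep K K') (q : ℕ) :
    (q, 1) ∈ K' ↔ (q, 1) ∈ K := by
  obtain ⟨r, c, r'', hI, hEq, hc2, -, -⟩ := nstep_data h
  have : ((q, 1) ∈ (↑K' : Set (ℕ × ℕ))) ↔ ((q, 1) ∈ (↑K : Set (ℕ × ℕ))) := by
    rw [hEq]
    exact hI.mem_swap_of_col (by simp; omega)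
  simpa using this

lemma nstep_pos {K K' : Finset (ℕ × ℕ)} (h : NStep K K') (hpos : PosDiag K) :
    PosDiag K' := by
  obtain ⟨r, c, hrc, hc2, hgap, hmax, r'', hlt, hnm, hbetw, hK'⟩ := h
  intro p hp
  rw [hK', Finset.mem_insert] at hp
  rcases hp with rfl | hp
  · have h1 := hpos _ hrc
    simp only at h1 ⊢
    omega
  · exact hpos _ (Finset.mem_of_mem_erase hp)

lemma nsteps_ncard {K S : Finset (ℕ × ℕ)} (h : Relation.ReflTransGen NStep K S) :
    (∀ i, (threadAt (↑S) i).ncard = (threadAt (↑K) i).ncard) ∧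
      (∀ q, ((q, 1) ∈ S ↔ (q, 1) ∈ K)) ∧ (PosDiag K → PosDiag S) := by
  induction h with
  | refl => exact ⟨fun _ => rfl, fun _ => Iff.rfl, id⟩
  | tail hKM hstep ih =>
    refine ⟨fun i => (nstep_ncard hstep i).trans (ih.1 i),
      fun q => (nstep_col1 hstep q).trans (ih.2.1 q),
      fun hp => nstep_pos hstep (ih.2.2 hp)⟩

/-! ### Positivity -/

lemma skyline_pos (a : List ℕ) : PosDiag (skyline a) := by
  intro p hp
  simp only [skyline, Finset.mem_biUnion, Finset.mem_range, Finset.mem_image] at hp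
  obtain ⟨i, -, j, -, rfl⟩ := hp
  simp

lemma kmove_pos {K K' : Finset (ℕ × ℕ)} (h : KMove K K') (hpos : PosDiag K) :
    PosDiag K' := by
  obtain ⟨r, c, r', hrc, -, hr', -, -, -, hK'⟩ := h
  intro p hp
  rw [hK', Finset.mem_insert] at hp
  rcases hp with rfl | hp
  · have h1 := hpos _ hrc
    simp only at h1 ⊢
    omega
  · exact hpos _ (Finset.mem_of_mem_erase hp)

lemma kmoves_pos {a : List ℕ} {K : Finset (ℕ × ℕ)}
    (h : Relation.ReflTransGen KMove (skyline a) K) : PosDiag K := by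
  induction h with
  | refl => exact skyline_pos a
  | tail _ hstep ih => exact kmove_pos hstep ih

/-! ### Threads of a skyline diagram are its rows -/

lemma skyline_down {S : Finset (ℕ × ℕ)} (hsky : IsSkyline S) {q j : ℕ}
    (hq : (q, j) ∈ S) : ∀ j', 1 ≤ j' → j' ≤ j → (q, j') ∈ S := by
  intro j' hj1 hjj
  have key : ∀ d, d ≤ j - j' → (q, j - d) ∈ S := by
    intro d
    induction d with
    | zero => intro _; simpa using hq
    | succ d ih =>
      intro hd
      have h1 : (q, j - d) ∈ S := ih (by omega)
      have h2 := hsky _ h1 (by simp; omega)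
      simpa only [show j - d - 1 = j - (d + 1) by omega] using h2
  have := key (j - j') le_rfl
  rwa [show j - (j - j') = j' by omega] at this

def RowSet (S : Finset (ℕ × ℕ)) (ρ : ℕ) : Set (ℕ × ℕ) := {p | p ∈ S ∧ p.1 = ρ}

structure GoodSub (S : Finset (ℕ × ℕ)) (X : Set (ℕ × ℕ)) : Prop where
  sub : X ⊆ ↑S
  rowcl : ∀ p : ℕ × ℕ, p ∈ S → (p.1, 1) ∈ X → p ∈ X
  colone : ∀ p : ℕ × ℕ, p ∈ X → (p.1, 1) ∈ X

lemma ft_row {S : Finset (ℕ × ℕ)} (hsky : IsSkyline S) (hpos : PosDiag S)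
    {X : Set (ℕ × ℕ)} (hX : GoodSub S X) {ρ : ℕ} (hρ : (ρ, 1) ∈ X)
    (hmin : ∀ q, (q, 1) ∈ X → ρ ≤ q) : firstThread X = RowSet S ρ := by
  have hstart : IsStart X (ρ, 1) := ⟨hρ, rfl, hmin⟩
  apply Set.Subset.antisymm
  · rintro x ⟨p₀, hst, hch⟩
    have hp₀ : p₀ = (ρ, 1) := isStart_unique hst hstart
    subst hp₀
    clear hst
    induction hch with
    | refl => exact ⟨hX.sub hρ, rfl⟩
    | @tail x y hxy hstep ih =>
      have hx1 : x.1 = ρ := ih.2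
      have hyX : y ∈ X := hstep.1
      have hy1 : ρ ≤ y.1 := hmin y.1 (hX.colone y hyX)
      have hy2 : y.1 ≤ ρ := hx1 ▸ hstep.2.2.1
      exact ⟨hX.sub hyX, le_antisymm hy2 hy1⟩
  · rintro p ⟨hpS, hp1⟩
    have hclaim : ∀ j, 1 ≤ j → (ρ, j) ∈ S → (ρ, j) ∈ firstThread X := by
      intro j
      induction j with
      | zero => omega
      | succ j ihj =>
        intro _ hmem
        rcases Nat.eq_or_lt_of_le (by omega : 1 ≤ j + 1) with h1 | h1
        · have : (ρ, j + 1) = (ρ, 1) := by rw [← h1]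
          rw [this]
          exact ⟨(ρ, 1), hstart, Relation.ReflTransGen.refl⟩
        · have hj1 : 1 ≤ j := by omega
          have hprev : (ρ, j) ∈ S := skyline_down hsky hmem j hj1 (by omega)
          have hprevT := ihj hj1 hprev
          have hmemX : (ρ, j + 1) ∈ X := hX.rowcl (ρ, j + 1) hmem hρ
          exact firstThread_tail hprevT ⟨hmemX, rfl, le_rfl,
            fun γ _ hγ => hγ⟩
    have hp2 : 1 ≤ p.2 := (hpos p hpS).2
    have hpe : p = (ρ, p.2) := Prod.ext hp1 rfl
    rw [hpe]
    exact hclaim p.2 hp2 (hpe ▸ hpS)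

lemma sky_threadAt {S : Finset (ℕ × ℕ)} (hsky : IsSkyline S) (hpos : PosDiag S) :
    ∀ i (X : Set (ℕ × ℕ)), GoodSub S X → ∀ r, (r, 1) ∈ X →
      {q | (q, 1) ∈ X ∧ q < r}.ncard = i →
      threadAt X i = RowSet S r := by
  intro i
  induction i with
  | zero =>
    intro X hX r hr hcount
    have hfin : {q | (q, 1) ∈ X ∧ q < r}.Finite :=
      (Set.finite_Iio r).subset (fun q hq => hq.2)
    have hempty : {q | (q, 1) ∈ X ∧ q < r} = ∅ := by
      rwa [Set.ncard_eq_zero hfin] at hcount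
    have hmin : ∀ q, (q, 1) ∈ X → r ≤ q := by
      intro q hq
      by_contra hlt
      push_neg at hlt
      have : q ∈ ({} : Set ℕ) := hempty ▸ (⟨hq, hlt⟩ : q ∈ {q | (q, 1) ∈ X ∧ q < r})
      exact this
    exact ft_row hsky hpos hX hr hmin
  | succ i ih =>
    intro X hX r hr hcount
    have hXfin : {q | (q, 1) ∈ X}.Finite := by
      have : {q | (q, 1) ∈ X} ⊆ (fun p : ℕ × ℕ => p.1) '' X :=
        fun q hq => ⟨(q, 1), hq, rfl⟩
      exact ((S.finite_toSet.subset hX.sub).image _).subset this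
    obtain ⟨ρ, hρX, hρmin⟩ := Set.exists_min_image _ id hXfin ⟨r, hr⟩
    have hρr : ρ < r := by
      have hne : {q | (q, 1) ∈ X ∧ q < r}.Nonempty := by
        apply Set.nonempty_of_ncard_ne_zero
        omega
      obtain ⟨q, hq1, hq2⟩ := hne
      exact lt_of_le_of_lt (hρmin q hq1) hq2
    have hFT : firstThread X = RowSet S ρ := ft_row hsky hpos hX hρX hρmin
    rw [threadAt_shift, hFT]
    have hX' : GoodSub S (X \ RowSet S ρ) := by
      refine ⟨fun p hp => hX.sub hp.1, ?_, ?_⟩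
      · rintro p hpS ⟨h1, h2⟩
        refine ⟨hX.rowcl p hpS h1, ?_⟩
        rintro ⟨-, hp1⟩
        exact h2 ⟨hX.sub h1, hp1⟩
      · rintro p ⟨h1, h2⟩
        refine ⟨hX.colone p h1, ?_⟩
        rintro ⟨-, hp1⟩
        exact h2 ⟨hX.sub h1, hp1⟩
    have hrX' : (r, 1) ∈ X \ RowSet S ρ := by
      refine ⟨hr, ?_⟩
      rintro ⟨-, hp1⟩
      simp only at hp1
      omega
    apply ih _ hX' r hrX'
    have hsetEq : {q | (q, 1) ∈ X \ RowSet S ρ ∧ q < r} =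
        {q | (q, 1) ∈ X ∧ q < r} \ {ρ} := by
      ext q
      simp only [Set.mem_setOf_eq, Set.mem_diff, Set.mem_singleton_iff]
      constructor
      · rintro ⟨⟨h1, h2⟩, h3⟩
        refine ⟨⟨h1, h3⟩, ?_⟩
        rintro rfl
        exact h2 ⟨hX.sub h1, rfl⟩
      · rintro ⟨⟨h1, h3⟩, h2⟩
        exact ⟨⟨h1, fun hrow => h2 hrow.2⟩, h3⟩
    rw [hsetEq]
    have hfin : {q | (q, 1) ∈ X ∧ q < r}.Finite :=
      (Set.finite_Iio r).subset (fun q hq => hq.2)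
    rw [Set.ncard_diff_singleton_of_mem (s := {q | (q, 1) ∈ X ∧ q < r}) (by exact ⟨hρX, hρr⟩), hcount]
    omega

/-! ### Main theorem -/

theorem stmt17 (a : List ℕ) (K S : Finset (ℕ × ℕ))
    (hK : Relation.ReflTransGen KMove (skyline a) K)
    (hS : Relation.ReflTransGen NStep K S) (hsky : IsSkyline S) :
    (∀ r : ℕ, (r, 1) ∈ K →
        {c : ℕ | (r, c) ∈ S}.ncard =
          (threadAt (↑K) ({r' : ℕ | r' < r ∧ (r', 1) ∈ K}.ncard)).ncard) ∧
    (∀ r : ℕ, (r, 1) ∉ K → ∀ c, (r, c) ∉ S) := by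
  have hposK : PosDiag K := kmoves_pos hK
  obtain ⟨hncard, hcol1, hposimp⟩ := nsteps_ncard hS
  have hposS : PosDiag S := hposimp hposK
  constructor
  · intro r hr
    have hrS : (r, 1) ∈ S := (hcol1 r).mpr hr
    have hGS : GoodSub S (↑S) := by
      refine ⟨subset_rfl, fun p hp _ => hp, fun p hp => ?_⟩
      have h2 := (hposS p hp).2
      exact skyline_down hsky (q := p.1) (j := p.2) hp 1 le_rfl h2
    set i := {r' : ℕ | r' < r ∧ (r', 1) ∈ K}.ncard with hi
    have hcnt : {q | (q, 1) ∈ (↑S : Set (ℕ × ℕ)) ∧ q < r}.ncard = i := by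
      rw [hi]
      congr 1
      ext q
      simp only [Set.mem_setOf_eq, Finset.mem_coe]
      rw [hcol1 q]
      tauto
    have hrow := sky_threadAt hsky hposS i (↑S) hGS r hrS hcnt
    have himg : RowSet S r = (fun cc => ((r : ℕ), cc)) '' {cc | (r, cc) ∈ S} := by
      ext p
      constructor
      · rintro ⟨hpS, hp1⟩
        exact ⟨p.2, by simp only [Set.mem_setOf_eq]; rw [← hp1]; exact hpS,
          Prod.ext hp1.symm rfl⟩
      · rintro ⟨cc, hc, rfl⟩
        exact ⟨hc, rfl⟩
    have hinj : Function.Injective (fun cc : ℕ => ((r : ℕ), cc)) :=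
      fun a b h => congrArg Prod.snd h
    calc {c : ℕ | (r, c) ∈ S}.ncard
        = (RowSet S r).ncard := by rw [himg, Set.ncard_image_of_injective _ hinj]
      _ = (threadAt (↑S) i).ncard := by rw [hrow]
      _ = (threadAt (↑K) i).ncard := hncard i
  · intro r hr c hc
    have hrS : (r, 1) ∉ S := fun h => hr ((hcol1 r).mp h)
    have h2 := (hposS _ hc).2
    exact hrS (skyline_down hsky hc 1 le_rfl h2)
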